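/- Let α > 0, σ ≠ 0, θ₀, z₀ ∈ ℝ, Θ₀ = (cos θ₀, sin θ₀). Let x = (x, y, z) ∈ ℝ³ with (x, y) ≠ Θ₀, set g = √((x − cos θ₀)² + (y − sin θ₀)²), x_T = (x − cos θ₀, y − sin θ₀, z − z₀), s = (|x_T|² − α²)/g, v = (x − cos θ₀, y − sin θ₀, 0), and u = (3[(z−z₀)² − α²](x − cos θ₀), 3[(z−z₀)² − α²](y − sin θ₀), −2g²(z − z₀)). Define r₁ = (1/g)·((2 − s/g)(x − cos θ₀), (2 − s/g)(y − sin θ₀), 2(z − z₀)), r₂ = (2σ/g)·(−(z−z₀)(x − cos θ₀)/g², −(z−z₀)(y − sin θ₀)/g², 1), and r₃ = (σ/g)(2 − s/g)·(sin θ₀, −cos θ₀, 0) + (σ·(sin θ₀·(x − cos θ₀) − cos θ₀·(y − sin θ₀))/g³)·(−v + u/g²). Then r₁ × r₂ = ±(2σ(|x_T|² + α²)/g⁴)·(−(y − sin θ₀), (x − cos θ₀), 0) and |det(r₁, r₂, r₃)| = |2 − s/g| · (2σ²(|x_T|² + α²)/g⁵) · |cos θ₀·x + sin θ₀·y − 1|.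 In particular, if additionally 2 − s/g ≠ 0 and √(x² + y²) < 1, then det(r₁, r₂, r₃) ≠ 0. -/

import Mathlib

open Real

/-- Cross product of vectors in `ℝ × ℝ × ℝ`. -/
def cross3 (a b : ℝ × ℝ × ℝ) : ℝ × ℝ × ℝ :=
  (a.2.1 * b.2.2 - a.2.2 * b.2.1, a.2.2 * b.1 - a.1 * b.2.2, a.1 * b.2.1 - a.2.1 * b.1)

/-- Determinant of the `3 × 3` matrix with rows `a`, `b`, `c` in `ℝ × ℝ × ℝ`. -/
def det3 (a b c : ℝ × ℝ × ℝ) : ℝ :=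
  a.1 * (b.2.1 * c.2.2 - b.2.2 * c.2.1) - a.2.1 * (b.1 * c.2.2 - b.2.2 * c.1) +
    a.2.2 * (b.1 * c.2.1 - b.2.1 * c.1)

lemma aux_cos_sin_le_sqrt (θ x y : ℝ) :
    Real.cos θ * x + Real.sin θ * y ≤ Real.sqrt (x ^ 2 + y ^ 2) := by
  rcases le_or_gt (Real.cos θ * x + Real.sin θ * y) 0 with h | h
  · exact h.trans (Real.sqrt_nonneg _)
  · have h2 : (Real.cos θ * x + Real.sin θ * y) ^ 2 ≤ x ^ 2 + y ^ 2 := by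
      nlinarith [sq_nonneg (Real.cos θ * y - Real.sin θ * x), Real.sin_sq_add_cos_sq θ]
    calc Real.cos θ * x + Real.sin θ * y
        = Real.sqrt ((Real.cos θ * x + Real.sin θ * y) ^ 2) := (Real.sqrt_sq h.le).symm
      _ ≤ Real.sqrt (x ^ 2 + y ^ 2) := Real.sqrt_le_sqrt h2

/-- Immersion property of the left projection of the canonical relation of the limited-data
lemon transform `R_L`: cross-product and determinant formulas for the gradients
`r₁ = ∇s`, `r₂ = ∇(∂Φ/∂z₀)`, `r₃ = ∇(∂Φ/∂θ₀)`, and nonvanishing of the determinant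
inside the open unit cylinder. -/
theorem lemonRL_leftProjection_immersion_det
    (α σ θ₀ z₀ x y z : ℝ) (hα : 0 < α) (hσ : σ ≠ 0)
    (hne : (x, y) ≠ (Real.cos θ₀, Real.sin θ₀))
    (g xT2 s w : ℝ) (vv uu r₁ r₂ r₃ : ℝ × ℝ × ℝ)
    (hg : g = Real.sqrt ((x - Real.cos θ₀) ^ 2 + (y - Real.sin θ₀) ^ 2))
    (hxT2 : xT2 = (x - Real.cos θ₀) ^ 2 + (y - Real.sin θ₀) ^ 2 + (z - z₀) ^ 2)
    (hs : s = (xT2 - α ^ 2) / g)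
    (hw : w = Real.sin θ₀ * (x - Real.cos θ₀) - Real.cos θ₀ * (y - Real.sin θ₀))
    (hvv : vv = (x - Real.cos θ₀, y - Real.sin θ₀, 0))
    (huu : uu = (3 * ((z - z₀) ^ 2 - α ^ 2) * (x - Real.cos θ₀),
      3 * ((z - z₀) ^ 2 - α ^ 2) * (y - Real.sin θ₀), -2 * g ^ 2 * (z - z₀)))
    (hr₁ : r₁ = (1 / g) • ((2 - s / g) * (x - Real.cos θ₀),
      (2 - s / g) * (y - Real.sin θ₀), 2 * (z - z₀)))
    (hr₂ : r₂ = (2 * σ / g) • (-((z - z₀) * (x - Real.cos θ₀)) / g ^ 2,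
      -((z - z₀) * (y - Real.sin θ₀)) / g ^ 2, 1))
    (hr₃ : r₃ = (σ / g * (2 - s / g)) • ((Real.sin θ₀, -Real.cos θ₀, 0) : ℝ × ℝ × ℝ) +
      (σ * w / g ^ 3) • (-vv + (1 / g ^ 2) • uu)) :
    (cross3 r₁ r₂ =
        (2 * σ * (xT2 + α ^ 2) / g ^ 4) • (-(y - Real.sin θ₀), x - Real.cos θ₀, (0 : ℝ)) ∨
      cross3 r₁ r₂ =
        -((2 * σ * (xT2 + α ^ 2) / g ^ 4) •
          (-(y - Real.sin θ₀), x - Real.cos θ₀, (0 : ℝ)))) ∧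
    |det3 r₁ r₂ r₃| =
      |2 - s / g| * (2 * σ ^ 2 * (xT2 + α ^ 2) / g ^ 5) *
        |Real.cos θ₀ * x + Real.sin θ₀ * y - 1| ∧
    (2 - s / g ≠ 0 → Real.sqrt (x ^ 2 + y ^ 2) < 1 → det3 r₁ r₂ r₃ ≠ 0) := by
  -- abbreviations
  set A := x - Real.cos θ₀ with hA
  set B := y - Real.sin θ₀ with hB
  set Cz := z - z₀ with hCz
  set k := 2 - s / g with hk
  have hAB : A ≠ 0 ∨ B ≠ 0 := by
    by_contra h
    push_neg at h
    refine hne ?_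
    rw [Prod.mk.injEq]
    exact ⟨by linarith [h.1], by linarith [h.2]⟩
  have habpos : 0 < A ^ 2 + B ^ 2 := by
    rcases hAB with h | h
    · have := sq_nonneg B; have := pow_pos (abs_pos.mpr h) 2
      simp only [sq_abs] at this; linarith
    · have := sq_nonneg A; have := pow_pos (abs_pos.mpr h) 2
      simp only [sq_abs] at this; linarith
  have hgpos : 0 < g := by rw [hg]; exact Real.sqrt_pos.mpr habpos
  have hgne : g ≠ 0 := ne_of_gt hgpos
  have hg2 : g ^ 2 = A ^ 2 + B ^ 2 := by rw [hg]; exact Real.sq_sqrt habpos.le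
  have hkey : k * g ^ 2 + 2 * Cz ^ 2 = xT2 + α ^ 2 := by
    rw [hk, hs, hxT2]
    field_simp
    linear_combination 2 * hg2
  have hcross : cross3 r₁ r₂ =
      ((2 * σ * (xT2 + α ^ 2) / g ^ 4) * B, -((2 * σ * (xT2 + α ^ 2) / g ^ 4) * A), 0) := by
    rw [hr₁, hr₂, ← hkey]
    simp only [cross3, Prod.smul_mk, smul_eq_mul, Prod.mk.injEq]
    refine ⟨by field_simp; ring, by field_simp; ring, by field_simp; ring⟩
  have tri : ∀ a b c : ℝ × ℝ × ℝ, det3 a b c =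
      c.1 * (cross3 a b).1 + c.2.1 * (cross3 a b).2.1 + c.2.2 * (cross3 a b).2.2 := by
    intro a b c; simp only [det3, cross3]; ring
  have hlin : Real.cos θ₀ * A + Real.sin θ₀ * B = Real.cos θ₀ * x + Real.sin θ₀ * y - 1 := by
    rw [hA, hB]
    linear_combination - Real.sin_sq_add_cos_sq θ₀
  have hdet : det3 r₁ r₂ r₃ = k * (2 * σ ^ 2 * (xT2 + α ^ 2) / g ^ 5) *
      (Real.cos θ₀ * x + Real.sin θ₀ * y - 1) := by
    rw [tri, hcross, hr₃, hvv, huu, ← hlin]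
    simp only [Prod.smul_mk, smul_eq_mul, Prod.neg_mk, Prod.mk_add_mk, neg_zero, mul_zero,
      add_zero, zero_add]
    field_simp
    ring
  have hσ2 : 0 < σ ^ 2 := by simpa [sq_abs] using pow_pos (abs_pos.mpr hσ) 2
  have hxT2nn : 0 ≤ xT2 := by rw [hxT2]; positivity
  have hQpos : 0 < 2 * σ ^ 2 * (xT2 + α ^ 2) / g ^ 5 := by
    exact div_pos (mul_pos (mul_pos two_pos hσ2)
      (add_pos_of_nonneg_of_pos hxT2nn (pow_pos hα 2))) (pow_pos hgpos 5)
  refine ⟨Or.inr ?_, ?_, ?_⟩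
  · rw [hcross]
    simp only [Prod.smul_mk, smul_eq_mul, Prod.neg_mk, Prod.mk.injEq]
    exact ⟨by ring, by trivial, by ring⟩
  · rw [hdet, abs_mul, abs_mul, abs_of_pos hQpos]
  · intro hk0 hlt
    have hle := aux_cos_sin_le_sqrt θ₀ x y
    have hL : Real.cos θ₀ * x + Real.sin θ₀ * y - 1 ≠ 0 := ne_of_lt (by linarith)
    rw [hdet]
    exact mul_ne_zero (mul_ne_zero hk0 (ne_of_gt hQpos)) hL
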